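/- Let A be a Ritt algebra (a differential ring containing ℚ) and ι : A → Â = O(Spec^Δ A) the canonical homomorphism into the ring of global sections of the structure sheaf on the differential spectrum. Then ι* : Spec^Δ Â → Spec^Δ A is a homeomorphism. -/

import Mathlib

/-- An ideal is a differential ideal w.r.t. a family of derivation maps `d`. -/
def IsDiffIdeal {A : Type*} [CommRing A] {k : ℕ} (d : Fin k → A → A) (I : Ideal A) : Prop :=
  ∀ i : Fin k, ∀ x ∈ I, d i x ∈ I

/-- The differential spectrum: prime differential ideals, with the Kolchin topology
(the subspace topology induced from the Zariski topology on `PrimeSpectrum`). -/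
abbrev DiffSpec {A : Type*} [CommRing A] {k : ℕ} (d : Fin k → A → A) :=
  {p : PrimeSpectrum A // IsDiffIdeal d p.asIdeal}

/-- A Keigher ring: the radical of every differential ideal is differential. -/
def IsKeigher {A : Type*} [CommRing A] {k : ℕ} (d : Fin k → A → A) : Prop :=
  ∀ I : Ideal A, IsDiffIdeal d I → IsDiffIdeal d I.radical

/-- `radDiffGen d E` is the smallest radical differential ideal containing `E`. -/
def radDiffGen {A : Type*} [CommRing A] {k : ℕ} (d : Fin k → A → A) (E : Set A) : Ideal A :=
  sInf {I : Ideal A | E ⊆ I ∧ I.IsRadical ∧ IsDiffIdeal d I}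

/-- A function `X → ⊔_p A_p` is regular if it is locally a quotient `a/b` with `b`
outside every prime differential ideal of the neighborhood. -/
def RegularLoc {A : Type*} [CommRing A] {k : ℕ} {d : Fin k → A → A}
    (f : ∀ p : DiffSpec d, Localization.AtPrime p.1.asIdeal) : Prop :=
  ∀ p : DiffSpec d, ∃ U : Set (DiffSpec d), IsOpen U ∧ p ∈ U ∧ ∃ a b : A,
    (∀ q ∈ U, b ∉ q.1.asIdeal) ∧
    ∀ q ∈ U, f q * algebraMap A (Localization.AtPrime q.1.asIdeal) b
      = algebraMap A (Localization.AtPrime q.1.asIdeal) a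

section Aux

variable {A : Type*} [CommRing A] {k : ℕ}

lemma subset_radDiffGen (d : Fin k → A → A) (E : Set A) : E ⊆ ↑(radDiffGen d E) := by
  intro x hx
  rw [SetLike.mem_coe, radDiffGen, Ideal.mem_sInf]
  intro I hI
  exact hI.1 hx

lemma radDiffGen_le (d : Fin k → A → A) {E : Set A} {I : Ideal A}
    (hE : E ⊆ I) (hrad : I.IsRadical) (hdiff : IsDiffIdeal d I) : radDiffGen d E ≤ I :=
  sInf_le ⟨hE, hrad, hdiff⟩

lemma radDiffGen_isRadical (d : Fin k → A → A) (E : Set A) : (radDiffGen d E).IsRadical := by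
  intro x hx
  obtain ⟨n, hn⟩ := hx
  rw [radDiffGen, Ideal.mem_sInf] at hn ⊢
  intro I hI
  exact hI.2.1 ⟨n, hn hI⟩

lemma radDiffGen_isDiff (d : Fin k → A → A) (E : Set A) : IsDiffIdeal d (radDiffGen d E) := by
  intro i x hx
  rw [radDiffGen, Ideal.mem_sInf] at hx ⊢
  intro I hI
  exact hI.2.2 i x (hx hI)

lemma radDiffGen_mono (d : Fin k → A → A) {E F : Set A} (h : E ⊆ F) :
    radDiffGen d E ≤ radDiffGen d F :=
  radDiffGen_le d (h.trans (subset_radDiffGen d F)) (radDiffGen_isRadical d F)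
    (radDiffGen_isDiff d F)

variable (δ : Fin k → Derivation ℤ A A)

/-- product lemma: in a radical differential ideal, `a*b ∈ I → a * δ b ∈ I`. -/
lemma mul_deriv_mem {I : Ideal A} (hrad : I.IsRadical) (hdiff : IsDiffIdeal (fun i => ⇑(δ i)) I)
    (i : Fin k) {a b : A} (hab : a * b ∈ I) : a * δ i b ∈ I := by
  have h1 : (δ i) (a * b) ∈ I := hdiff i _ hab
  have hleib : (δ i) (a * b) = a * δ i b + b * δ i a := by
    rw [Derivation.leibniz, smul_eq_mul, smul_eq_mul]
  have h2 : (a * δ i b) * (a * δ i b) ∈ I := by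
    have : (a * δ i b) * (a * δ i b) =
        (a * δ i b) * ((δ i) (a * b)) - (a * b) * (δ i a * δ i b) := by
      rw [hleib]; ring
    rw [this]
    exact Ideal.sub_mem _ (Ideal.mul_mem_left _ _ h1) (Ideal.mul_mem_right _ _ hab)
  exact hrad ⟨2, by rwa [pow_two]⟩

lemma nat_smul_cancel [Algebra ℚ A] {n : ℕ} (hn : n ≠ 0) {x : A} (h : n • x = 0) : x = 0 := by
  have h' : (n : A) * x = 0 := by rwa [nsmul_eq_mul] at h
  have : algebraMap ℚ A ((n : ℚ)⁻¹) * ((n : A) * x) = x := by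
    rw [← mul_assoc]
    have : (n : A) = algebraMap ℚ A (n : ℚ) := by simp
    rw [this, ← map_mul, inv_mul_cancel₀ (by exact_mod_cast hn), map_one, one_mul]
  rw [← this, h', mul_zero]

/-- In a Ritt algebra the nilradical is differential. -/
lemma nilradical_diff [Algebra ℚ A] (i : Fin k) {a : A} (ha : a ∈ nilradical A) :
    δ i a ∈ nilradical A := by
  rw [mem_nilradical] at ha ⊢
  obtain ⟨n, hn⟩ := ha
  rcases Nat.eq_zero_or_pos n with rfl | hnpos
  · rw [pow_zero] at hn
    refine ⟨1, ?_⟩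
    rw [pow_one]
    calc δ i a = δ i a * 1 := (mul_one _).symm
      _ = δ i a * 0 := by rw [hn]
      _ = 0 := mul_zero _
  have key : ∀ m : ℕ, m < n → a ^ (n - 1 - m) * (δ i a) ^ (2 * m + 1) = 0 := by
    intro m
    induction m with
    | zero =>
      intro _
      have hd : (δ i) (a ^ n) = 0 := by rw [hn, map_zero]
      rw [Derivation.leibniz_pow] at hd
      rw [smul_eq_mul] at hd
      have := nat_smul_cancel hnpos.ne' hd
      simpa using this
    | succ m ih =>
      intro hm1
      have hm : m < n := Nat.lt_of_succ_lt hm1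
      have E := ih hm
      have hd : (δ i) (a ^ (n - 1 - m) * (δ i a) ^ (2 * m + 1)) = 0 := by rw [E, map_zero]
      rw [Derivation.leibniz, Derivation.leibniz_pow, Derivation.leibniz_pow] at hd
      have hd' := congrArg (fun z => (δ i a) * z) hd
      simp only [mul_zero] at hd'
      have expand : (δ i a) * ((a ^ (n-1-m)) • ((2*m+1) • (δ i a) ^ (2*m+1-1) • (δ i (δ i a)))
          + ((δ i a) ^ (2*m+1)) • ((n-1-m) • a ^ (n-1-m-1) • (δ i a)))
          = (2*m+1) • ((a ^ (n-1-m) * (δ i a) ^ (2*m+1)) * (δ i (δ i a)))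
            + (n-1-m) • (a ^ (n-1-(m+1)) * (δ i a) ^ (2*(m+1)+1)) := by
        have e1 : 2*m+1-1 = 2*m := by omega
        have e2 : n-1-m-1 = n-1-(m+1) := by omega
        have e3 : 2*(m+1)+1 = (2*m) + 3 := by omega
        have e4 : 2*m+1 = (2*m) + 1 := rfl
        rw [e1, e2, e3, e4]
        simp only [smul_eq_mul, nsmul_eq_mul]
        push_cast
        ring
      rw [expand, E] at hd'
      simp only [zero_mul, mul_zero, smul_zero, zero_add] at hd'
      have hne : n - 1 - m ≠ 0 := by omega
      exact nat_smul_cancel hne hd'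
  have fin := key (n - 1) (by omega)
  exact ⟨2 * (n-1) + 1, by simpa using fin⟩

end Aux

section Aux2

variable {A : Type*} [CommRing A] {k : ℕ} (δ : Fin k → Derivation ℤ A A)

/-- the ideal `{x | b * x ∈ G}`. -/
def mulPre {A : Type*} [CommRing A] (G : Ideal A) (b : A) : Ideal A where
  carrier := {x | b * x ∈ G}
  add_mem' := by
    intro x y hx hy
    simp only [Set.mem_setOf_eq, mul_add] at *
    exact Ideal.add_mem _ hx hy
  zero_mem' := by simp
  smul_mem' := by
    intro c x hx
    simp only [Set.mem_setOf_eq, smul_eq_mul] at *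
    rw [mul_left_comm]
    exact Ideal.mul_mem_left _ _ hx

@[simp] lemma mem_mulPre {G : Ideal A} {b x : A} : x ∈ mulPre G b ↔ b * x ∈ G := Iff.rfl

lemma mul_radDiffGen_mem {b : A} {E : Set A} {G : Ideal A} (hGrad : G.IsRadical)
    (hGdiff : IsDiffIdeal (fun i => ⇑(δ i)) G) (hbE : ∀ e ∈ E, b * e ∈ G) :
    ∀ x ∈ radDiffGen (fun i => ⇑(δ i)) E, b * x ∈ G := by
  have hT : radDiffGen (fun i => ⇑(δ i)) E ≤ mulPre G b := by
    apply radDiffGen_le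
    · intro e he
      exact hbE e he
    · -- radical
      intro x hx
      obtain ⟨n, hn⟩ := hx
      rw [mem_mulPre]
      rcases Nat.eq_zero_or_pos n with rfl | hpos
      · rw [pow_zero] at hn
        rw [mem_mulPre, mul_one] at hn
        exact Ideal.mul_mem_right _ _ hn
      · rw [mem_mulPre] at hn
        apply hGrad
        refine ⟨n, ?_⟩
        have : (b * x) ^ n = b ^ (n - 1) * (b * x ^ n) := by
          rw [mul_pow, ← mul_assoc]
          congr 1
          rw [← pow_succ]
          congr 1
          omega
        rw [this]
        exact Ideal.mul_mem_left _ _ hn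
    · -- differential
      intro i x hx
      rw [mem_mulPre] at hx ⊢
      exact mul_deriv_mem δ hGrad hGdiff i hx
  intro x hx
  exact hT hx

/-- Zorn: a radical differential ideal avoiding `c` is contained in a prime differential
ideal avoiding `c`. -/
lemma exists_diffPrime_avoiding {I : Ideal A} (hrad : I.IsRadical)
    (hdiff : IsDiffIdeal (fun i => ⇑(δ i)) I) {c : A} (hc : c ∉ I) :
    ∃ P : Ideal A, P.IsPrime ∧ IsDiffIdeal (fun i => ⇑(δ i)) P ∧ I ≤ P ∧ c ∉ P := by
  set S : Set (Ideal A) :=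
    {J | J.IsRadical ∧ IsDiffIdeal (fun i => ⇑(δ i)) J ∧ c ∉ J} with hS
  obtain ⟨M, hIM, hMS, hMmax⟩ : ∃ M, I ≤ M ∧ M ∈ S ∧ ∀ J ∈ S, M ≤ J → J = M := by
    have := zorn_le_nonempty₀ S ?_ I ⟨hrad, hdiff, hc⟩
    · obtain ⟨M, hIM, hM⟩ := this
      exact ⟨M, hIM, hM.prop, fun J hJ hMJ => le_antisymm (hM.le_of_ge hJ hMJ) hMJ⟩
    · intro ch hchS hchain J hJch
      refine ⟨sSup ch, ?_, fun z hz => le_sSup hz⟩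
      have hne : ch.Nonempty := ⟨J, hJch⟩
      have hmem : ∀ x : A, x ∈ sSup ch ↔ ∃ K ∈ ch, x ∈ K := by
        intro x
        exact Submodule.mem_sSup_of_directed hne hchain.directedOn
      refine ⟨?_, ?_, ?_⟩
      · intro x hx
        obtain ⟨n, hn⟩ := hx
        rw [hmem] at hn
        obtain ⟨K, hKch, hK⟩ := hn
        rw [hmem]
        exact ⟨K, hKch, (hchS hKch).1 ⟨n, hK⟩⟩
      · intro i x hx
        rw [hmem] at hx ⊢
        obtain ⟨K, hKch, hK⟩ := hx
        exact ⟨K, hKch, (hchS hKch).2.1 i x hK⟩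
      · intro hcs
        rw [hmem] at hcs
        obtain ⟨K, hKch, hK⟩ := hcs
        exact (hchS hKch).2.2 hK
  obtain ⟨hMrad, hMdiff, hcM⟩ := hMS
  refine ⟨M, ?_, hMdiff, hIM, hcM⟩
  constructor
  · intro hM
    exact hcM (hM ▸ Submodule.mem_top)
  · intro x y hxy
    by_contra hcon
    push_neg at hcon
    obtain ⟨hx, hy⟩ := hcon
    -- radDiffGen of M ∪ {x} contains c
    have hcMx : ∀ z : A, z ∉ M →
        c ∈ radDiffGen (fun i => ⇑(δ i)) (↑M ∪ {z}) := by
      intro z hz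
      by_contra hcn
      have : radDiffGen (fun i => ⇑(δ i)) (↑M ∪ {z}) = M := by
        apply hMmax
        · exact ⟨radDiffGen_isRadical _ _, radDiffGen_isDiff _ _, hcn⟩
        · intro w hw
          exact subset_radDiffGen _ _ (Or.inl hw)
      exact hz (this ▸ subset_radDiffGen _ _ (Or.inr rfl))
    have hcx := hcMx x hx
    have hcy := hcMx y hy
    -- x * (anything in radDiffGen (M ∪ {y})) ∈ M
    have hxMy : ∀ v ∈ radDiffGen (fun i => ⇑(δ i)) (↑M ∪ {y}), x * v ∈ M := by
      apply mul_radDiffGen_mem δ hMrad hMdiff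
      intro e he
      rcases he with he | he
      · exact Ideal.mul_mem_left _ _ he
      · rw [he]
        exact hxy
    -- c * c ∈ M
    have hcc : c * c ∈ M := by
      have h1 : ∀ u ∈ radDiffGen (fun i => ⇑(δ i)) (↑M ∪ {x}), c * u ∈ M := by
        have hyc : x * c ∈ M := hxMy c hcy
        apply mul_radDiffGen_mem δ hMrad hMdiff
        intro e he
        rcases he with he | he
        · exact Ideal.mul_mem_left _ _ he
        · rw [he, mul_comm]
          exact hyc
      exact h1 c hcx
    exact hcM (hMrad ⟨2, by rwa [pow_two]⟩)

end Aux2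

section Aux3

variable {A : Type*} [CommRing A] {k : ℕ} (δ : Fin k → Derivation ℤ A A)

/-- A prime differential ideal is radical differential, hence contains `radDiffGen E`
whenever it contains `E`. -/
lemma radDiffGen_le_of_diffPrime {E : Set A} (r : DiffSpec (fun i => ⇑(δ i)))
    (hEr : E ⊆ ↑r.1.asIdeal) : radDiffGen (fun i => ⇑(δ i)) E ≤ r.1.asIdeal :=
  radDiffGen_le _ hEr r.1.isPrime.isRadical r.2

/-- If no prime differential ideal contains `E` then `1 ∈ radDiffGen E`. -/
lemma one_mem_radDiffGen {E : Set A}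
    (h : ∀ r : DiffSpec (fun i => ⇑(δ i)), ¬ E ⊆ ↑r.1.asIdeal) :
    (1 : A) ∈ radDiffGen (fun i => ⇑(δ i)) E := by
  by_contra h1
  obtain ⟨P, hP, hPdiff, hIP, hcP⟩ := exists_diffPrime_avoiding δ
    (radDiffGen_isRadical (fun i => ⇑(δ i)) E) (radDiffGen_isDiff (fun i => ⇑(δ i)) E) h1
  exact h ⟨⟨P, hP⟩, hPdiff⟩ ((subset_radDiffGen _ _).trans hIP)

/-- Compactness: `1 ∈ radDiffGen E` comes from finitely many elements of `E`. -/
lemma exists_finset_one_mem {E : Set A}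
    (h : (1 : A) ∈ radDiffGen (fun i => ⇑(δ i)) E) :
    ∃ t : Finset A, ↑t ⊆ E ∧ (1 : A) ∈ radDiffGen (fun i => ⇑(δ i)) ↑t := by
  classical
  set U : Ideal A :=
    { carrier := {x | ∃ t : Finset A, ↑t ⊆ E ∧ x ∈ radDiffGen (fun i => ⇑(δ i)) ↑t}
      add_mem' := by
        rintro x y ⟨t₁, ht₁, hx⟩ ⟨t₂, ht₂, hy⟩
        refine ⟨t₁ ∪ t₂, ?_, ?_⟩
        · rw [Finset.coe_union]
          exact Set.union_subset ht₁ ht₂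
        · rw [Finset.coe_union]
          exact Ideal.add_mem _
            (radDiffGen_mono _ Set.subset_union_left hx)
            (radDiffGen_mono _ Set.subset_union_right hy)
      zero_mem' := ⟨∅, by simp, by simp⟩
      smul_mem' := by
        rintro c x ⟨t, ht, hx⟩
        exact ⟨t, ht, by rw [smul_eq_mul]; exact Ideal.mul_mem_left _ _ hx⟩ } with hU
  have hle : radDiffGen (fun i => ⇑(δ i)) E ≤ U := by
    apply radDiffGen_le
    · intro e he
      exact ⟨{e}, by simpa using he, subset_radDiffGen _ _ (by simp)⟩
    · rintro x ⟨n, t, ht, hx⟩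
      exact ⟨t, ht, radDiffGen_isRadical _ _ ⟨n, hx⟩⟩
    · rintro i x ⟨t, ht, hx⟩
      exact ⟨t, ht, radDiffGen_isDiff _ _ i x hx⟩
  exact hle h

variable [Algebra ℚ A]

/-- the "radical annihilator" `{t | t * x ∈ nilradical A}` is a radical differential ideal. -/
def annRad {A : Type*} [CommRing A] (x : A) : Ideal A := mulPre (nilradical A) x

lemma mem_annRad {x t : A} : t ∈ annRad x ↔ x * t ∈ nilradical A := Iff.rfl

lemma annRad_isRadical (x : A) : (annRad (A := A) x).IsRadical := by
  rintro t ⟨n, hn⟩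
  rw [mem_annRad] at hn ⊢
  rcases Nat.eq_zero_or_pos n with rfl | hpos
  · rw [pow_zero, mul_one] at hn
    exact Ideal.mul_mem_right _ _ hn
  · apply Ideal.radical_isRadical (0 : Ideal A)
    refine ⟨n, ?_⟩
    have : (x * t) ^ n = x ^ (n - 1) * (x * t ^ n) := by
      rw [mul_pow, ← mul_assoc]
      congr 1
      rw [← pow_succ]
      congr 1
      omega
    rw [this]
    exact Ideal.mul_mem_left _ _ hn

lemma nilradical_isDiff : IsDiffIdeal (fun i => ⇑(δ i)) (nilradical A) := by
  intro i x hx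
  exact nilradical_diff δ i hx

lemma annRad_isDiff (x : A) : IsDiffIdeal (fun i => ⇑(δ i)) (annRad x) := by
  intro i t ht
  rw [mem_annRad] at ht ⊢
  exact mul_deriv_mem δ (Ideal.radical_isRadical (0 : Ideal A)) (nilradical_isDiff δ) i ht

/-- KEY: if `algebraMap x` vanishes at every differential prime not containing `s`,
then `s * x` is nilpotent. -/
lemma nilpotent_of_vanishing {x s : A}
    (h : ∀ r : DiffSpec (fun i => ⇑(δ i)), s ∉ r.1.asIdeal →
      algebraMap A (Localization.AtPrime r.1.asIdeal) x = 0) :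
    s * x ∈ nilradical A := by
  by_contra hns
  have hs : s ∉ annRad x := by
    rw [mem_annRad]
    rwa [mul_comm] at hns
  obtain ⟨P, hP, hPdiff, hIP, hsP⟩ :=
    exists_diffPrime_avoiding δ (annRad_isRadical x) (annRad_isDiff δ x) hs
  set r : DiffSpec (fun i => ⇑(δ i)) := ⟨⟨P, hP⟩, hPdiff⟩ with hr
  have h0 := h r hsP
  rw [IsLocalization.map_eq_zero_iff P.primeCompl] at h0
  obtain ⟨u, hu⟩ := h0
  have : (u : A) ∈ annRad x := by
    rw [mem_annRad, mul_comm]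
    rw [hu]
    exact (nilradical A).zero_mem
  exact u.2 (hIP this)

end Aux3

set_option maxHeartbeats 4000000

/-- For a Ritt algebra `A` (a differential ring containing `ℚ`), the contraction map
`ι* : Spec^Δ Â → Spec^Δ A` along the canonical map `ι : A → Â = O(X)` into the ring of
global sections of the structure sheaf (here `D`, the subring of exactly the everywhere
regular functions) is a homeomorphism. -/
theorem stmt16 {A : Type*} [CommRing A] [Algebra ℚ A] {k : ℕ}
    (δ : Fin k → Derivation ℤ A A)
    (hcomm : ∀ i j a, δ i (δ j a) = δ j (δ i a))
    (δL : ∀ p : DiffSpec (fun i => ⇑(δ i)),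
      Fin k → Derivation ℤ (Localization.AtPrime p.1.asIdeal) (Localization.AtPrime p.1.asIdeal))
    (hδL : ∀ (p : DiffSpec (fun i => ⇑(δ i))) (i : Fin k) (a : A),
      δL p i (algebraMap A (Localization.AtPrime p.1.asIdeal) a)
        = algebraMap A (Localization.AtPrime p.1.asIdeal) (δ i a))
    (D : Subring (∀ p : DiffSpec (fun i => ⇑(δ i)), Localization.AtPrime p.1.asIdeal))
    (hmem : ∀ f, f ∈ D ↔ RegularLoc f)
    (himg : ∀ a : A,
      (fun p : DiffSpec (fun i => ⇑(δ i)) => algebraMap A (Localization.AtPrime p.1.asIdeal) a) ∈ D)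
    (hclosed : ∀ f ∈ D, ∀ i, (fun p => δL p i (f p)) ∈ D)
    (dD : Fin k → D → D)
    (hdD : ∀ i (x : D) (p : DiffSpec (fun i => ⇑(δ i))),
      ((dD i x : D) : ∀ p, Localization.AtPrime p.1.asIdeal) p
        = δL p i (((x : D) : ∀ p, Localization.AtPrime p.1.asIdeal) p)) :
    ∃ h : DiffSpec dD ≃ₜ DiffSpec (fun i => ⇑(δ i)),
      ∀ q, (h q).1.asIdeal = Ideal.comap
        (RingHom.codRestrict
          (Pi.ringHom fun p : DiffSpec (fun i => ⇑(δ i)) =>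
            algebraMap A (Localization.AtPrime p.1.asIdeal)) D himg) q.1.asIdeal := by
  classical
  set ι : A →+* ↥D := RingHom.codRestrict
      (Pi.ringHom fun p : DiffSpec (fun i => ⇑(δ i)) =>
        algebraMap A (Localization.AtPrime p.1.asIdeal)) D himg with hι
  have hιapp : ∀ (a : A) (p : DiffSpec (fun i => ⇑(δ i))),
      ((ι a : ↥D) : ∀ p, Localization.AtPrime p.1.asIdeal) p
        = algebraMap A (Localization.AtPrime p.1.asIdeal) a := fun a p => rfl
  -- ι commutes with the derivations
  have hιcomm : ∀ (i : Fin k) (a : A), dD i (ι a) = ι (δ i a) := by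
    intro i a
    apply Subtype.ext
    funext p
    rw [hdD i (ι a) p, hιapp, hδL, hιapp]
  -- the comparison map φ : DiffSpec dD → DiffSpec δ
  have hφdiff : ∀ q : DiffSpec dD,
      IsDiffIdeal (fun i => ⇑(δ i)) ((PrimeSpectrum.comap ι q.1).asIdeal) := by
    intro q i x hx
    rw [PrimeSpectrum.comap_asIdeal, Ideal.mem_comap] at hx ⊢
    rw [← hιcomm]
    exact q.2 i _ hx
  set φ : DiffSpec dD → DiffSpec (fun i => ⇑(δ i)) :=
    fun q => ⟨PrimeSpectrum.comap ι q.1, hφdiff q⟩ with hφ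
  -- evaluation maps
  set ev : ∀ p : DiffSpec (fun i => ⇑(δ i)),
      ↥D →+* Localization.AtPrime p.1.asIdeal :=
    fun p => (Pi.evalRingHom _ p).comp D.subtype with hev
  have hevapp : ∀ (p : DiffSpec (fun i => ⇑(δ i))) (f : ↥D),
      ev p f = ((f : ↥D) : ∀ p, Localization.AtPrime p.1.asIdeal) p := fun p f => rfl
  -- the maximal ideal of each stalk
  set mI : ∀ p : DiffSpec (fun i => ⇑(δ i)), Ideal (Localization.AtPrime p.1.asIdeal) :=
    fun p => IsLocalRing.maximalIdeal _ with hmI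
  have hmIprime : ∀ p, (mI p).IsPrime := fun p =>
    (IsLocalRing.maximalIdeal.isMaximal _).isPrime
  have hto_map : ∀ (p : DiffSpec (fun i => ⇑(δ i))) (x : A),
      algebraMap A (Localization.AtPrime p.1.asIdeal) x ∈ mI p ↔ x ∈ p.1.asIdeal := by
    intro p x
    exact IsLocalization.AtPrime.to_map_mem_maximal_iff _ p.1.asIdeal x
  have hunit : ∀ (p : DiffSpec (fun i => ⇑(δ i))) {b : A}, b ∉ p.1.asIdeal →
      IsUnit (algebraMap A (Localization.AtPrime p.1.asIdeal) b) := by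
    intro p b hb
    exact IsLocalization.map_units _ (⟨b, hb⟩ : p.1.asIdeal.primeCompl)
  -- the maximal ideal is differential
  have hmIdiff : ∀ (p : DiffSpec (fun i => ⇑(δ i))) (i : Fin k),
      ∀ x ∈ mI p, δL p i x ∈ mI p := by
    intro p i x hx
    obtain ⟨⟨a, s⟩, hsurj⟩ := IsLocalization.surj (M := p.1.asIdeal.primeCompl) x
    have ha : a ∈ p.1.asIdeal := by
      rw [← hto_map p a, ← hsurj]
      exact Ideal.mul_mem_right _ _ hx
    have hd := congrArg (δL p i) hsurj
    rw [Derivation.leibniz, hδL, hδL] at hd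
    -- hd : x • alg (δ i s) + alg s • δL p i x = alg (δ i a)
    have hmemsum : algebraMap A _ (s : A) * δL p i x ∈ mI p := by
      have h1 : algebraMap A _ (s : A) * δL p i x
          = algebraMap A _ (δ i a) - x * algebraMap A _ (δ i (s : A)) := by
        rw [← hd, smul_eq_mul, smul_eq_mul]
        ring
      rw [h1]
      apply Ideal.sub_mem
      · rw [hto_map]
        exact p.2 i a ha
      · exact Ideal.mul_mem_right _ _ hx
    have hu := hunit p s.2
    obtain ⟨u, hu⟩ := hu
    have := Ideal.mul_mem_right (↑u⁻¹) _ hmemsum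
    rwa [← hu, mul_comm (↑u : Localization.AtPrime p.1.asIdeal), mul_assoc,
      u.mul_inv, mul_one] at this
  -- the backward map ψ
  have hψdiff : ∀ p : DiffSpec (fun i => ⇑(δ i)),
      IsDiffIdeal dD (Ideal.comap (ev p) (mI p)) := by
    intro p i f hf
    rw [Ideal.mem_comap] at hf ⊢
    rw [hevapp, hdD i f p]
    exact hmIdiff p i _ (by rwa [hevapp] at hf)
  set ψ : DiffSpec (fun i => ⇑(δ i)) → DiffSpec dD :=
    fun p => ⟨⟨Ideal.comap (ev p) (mI p), Ideal.IsPrime.comap _ (hK := hmIprime p)⟩,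
      hψdiff p⟩ with hψ
  -- regularity data, shrunk to basic opens
  have hshrink : ∀ (g : ↥D) (r : DiffSpec (fun i => ⇑(δ i))),
      ∃ (c a b : A), c ∉ r.1.asIdeal ∧ ∀ r' : DiffSpec (fun i => ⇑(δ i)),
        c ∉ r'.1.asIdeal → (b ∉ r'.1.asIdeal ∧
          ((g : ↥D) : ∀ p, Localization.AtPrime p.1.asIdeal) r'
              * algebraMap A (Localization.AtPrime r'.1.asIdeal) b
            = algebraMap A (Localization.AtPrime r'.1.asIdeal) a) := by
    intro g r
    obtain ⟨U, hU, hrU, a, b, hb, heq⟩ := (hmem (g : ∀ p, _)).mp g.2 r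
    rw [isOpen_induced_iff] at hU
    obtain ⟨V, hV, hUV⟩ := hU
    have hrV : r.1 ∈ V := by
      rw [← hUV] at hrU
      exact hrU
    obtain ⟨W, hWbasis, hrW, hWV⟩ :=
      PrimeSpectrum.isTopologicalBasis_basic_opens.exists_subset_of_mem_open hrV hV
    obtain ⟨c, rfl⟩ := hWbasis
    refine ⟨c, a, b, ?_, ?_⟩
    · exact (PrimeSpectrum.mem_basicOpen c r.1).mp hrW
    · intro r' hcr'
      have hr'U : r' ∈ U := by
        rw [← hUV]
        exact hWV ((PrimeSpectrum.mem_basicOpen c r'.1).mpr hcr')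
      exact ⟨hb r' hr'U, heq r' hr'U⟩
  -- THE KEY NILPOTENCY LEMMA
  have hstar : ∀ (g : ↥D) (c : A),
      (∀ r : DiffSpec (fun i => ⇑(δ i)), c ∉ r.1.asIdeal →
        ((g : ↥D) : ∀ p, Localization.AtPrime p.1.asIdeal) r = 0) →
      ∃ N : ℕ, (ι c * g) ^ (N + 1) = 0 := by
    intro g c hvan
    choose cF aF bF hcF hF using fun r => hshrink g r
    have h1mem : (1 : A) ∈ radDiffGen (fun i => ⇑(δ i)) (Set.range cF) := by
      apply one_mem_radDiffGen
      intro r hsub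
      exact hcF r (hsub ⟨r, rfl⟩)
    obtain ⟨t, htE, h1t⟩ := exists_finset_one_mem δ h1mem
    have hpt : ∀ e : {e // e ∈ t}, ∃ r, cF r = (e : A) := fun e => htE e.2
    choose pt hptF using hpt
    -- nilpotency at each patch
    have hnil : ∀ e : {e // e ∈ t}, ∃ n : ℕ,
        ((c * (e : A)) * aF (pt e)) ^ (n + 1) = 0 := by
      intro e
      have hvan' : ∀ r : DiffSpec (fun i => ⇑(δ i)), c * (e : A) ∉ r.1.asIdeal →
          algebraMap A (Localization.AtPrime r.1.asIdeal) (aF (pt e)) = 0 := by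
        intro r hce
        have hc : c ∉ r.1.asIdeal := fun h => hce (Ideal.mul_mem_right _ _ h)
        have he : (e : A) ∉ r.1.asIdeal := fun h => hce (Ideal.mul_mem_left _ _ h)
        rw [← hptF e] at he
        obtain ⟨hbr, heqr⟩ := hF (pt e) r he
        rw [← heqr, hvan r hc, zero_mul]
      have := nilpotent_of_vanishing δ (x := aF (pt e)) (s := c * (e : A)) hvan'
      rw [mem_nilradical] at this
      obtain ⟨n, hn⟩ := this
      refine ⟨n, ?_⟩
      rw [pow_succ, hn, zero_mul]
    choose nn hnn using hnil
    set N : ℕ := (Finset.univ : Finset {e // e ∈ t}).sup nn with hN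
    have hnnN : ∀ e : {e // e ∈ t}, ((c * (e : A)) * aF (pt e)) ^ (N + 1) = 0 := by
      intro e
      have hle : nn e + 1 ≤ N + 1 := by
        have := Finset.le_sup (f := nn) (Finset.mem_univ e)
        omega
      have : ((c * (e : A)) * aF (pt e)) ^ (N + 1)
          = ((c * (e : A)) * aF (pt e)) ^ (nn e + 1)
            * ((c * (e : A)) * aF (pt e)) ^ (N - nn e) := by
        rw [← pow_add]
        congr 1
        omega
      rw [this, hnn e, zero_mul]
    refine ⟨N, ?_⟩
    apply Subtype.ext
    funext r
    have hcover : ∃ e : {e // e ∈ t}, (e : A) ∉ r.1.asIdeal := by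
      by_contra hall
      push_neg at hall
      have hsub : (↑t : Set A) ⊆ ↑r.1.asIdeal := by
        intro e he
        exact hall ⟨e, he⟩
      have := radDiffGen_le_of_diffPrime δ r hsub h1t
      exact r.1.isPrime.ne_top ((Ideal.eq_top_iff_one _).mpr this)
    obtain ⟨e, her⟩ := hcover
    have hptr : cF (pt e) ∉ r.1.asIdeal := by
      rw [hptF e]
      exact her
    obtain ⟨hbr, heqr⟩ := hF (pt e) r hptr
    -- now compute the germ at r
    have hcoe : (((ι c * g) ^ (N + 1) : ↥D) : ∀ p, Localization.AtPrime p.1.asIdeal) r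
        = (algebraMap A (Localization.AtPrime r.1.asIdeal) c
            * ((g : ↥D) : ∀ p, Localization.AtPrime p.1.asIdeal) r) ^ (N + 1) := by
      rfl
    rw [hcoe]
    have hstep : (algebraMap A (Localization.AtPrime r.1.asIdeal) c
          * ((g : ↥D) : ∀ p, Localization.AtPrime p.1.asIdeal) r) ^ (N + 1)
        * (algebraMap A (Localization.AtPrime r.1.asIdeal) (bF (pt e))) ^ (N + 1)
        = algebraMap A (Localization.AtPrime r.1.asIdeal) ((c * aF (pt e)) ^ (N + 1)) := by
      rw [← mul_pow, mul_assoc, heqr, ← map_mul, ← map_pow]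
    have hkill : algebraMap A (Localization.AtPrime r.1.asIdeal) ((c * aF (pt e)) ^ (N + 1))
        * algebraMap A (Localization.AtPrime r.1.asIdeal) ((e : A) ^ (N + 1)) = 0 := by
      rw [← map_mul]
      have : (c * aF (pt e)) ^ (N + 1) * (e : A) ^ (N + 1)
          = ((c * (e : A)) * aF (pt e)) ^ (N + 1) := by
        rw [← mul_pow]
        congr 1
        ring
      rw [this, hnnN e, map_zero]
    -- units
    have hue : IsUnit (algebraMap A (Localization.AtPrime r.1.asIdeal) ((e : A) ^ (N + 1))) := by
      rw [map_pow]
      exact (hunit r her).pow _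
    have hub : IsUnit ((algebraMap A (Localization.AtPrime r.1.asIdeal) (bF (pt e))) ^ (N + 1)) :=
      (hunit r hbr).pow _
    have hz : ∀ (x y : Localization.AtPrime r.1.asIdeal), IsUnit y → x * y = 0 → x = 0 := by
      intro x y hy hxy
      obtain ⟨u, rfl⟩ := hy
      have := congrArg (fun z => z * (↑u⁻¹ : Localization.AtPrime r.1.asIdeal)) hxy
      simpa [mul_assoc] using this
    have h2 := hz _ _ hue hkill
    rw [← hstep] at h2
    have h3 := hz _ _ hub h2
    rw [h3]
    rfl
  -- MAIN: membership in q is germ membership at φ q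
  have hmain : ∀ (q : DiffSpec dD) (f : ↥D),
      f ∈ q.1.asIdeal ↔ ev (φ q) f ∈ mI (φ q) := by
    intro q f
    set p : DiffSpec (fun i => ⇑(δ i)) := φ q with hp
    have hpq : ∀ x : A, x ∈ p.1.asIdeal ↔ ι x ∈ q.1.asIdeal := fun x => Iff.rfl
    obtain ⟨c, a, b, hc, hprop⟩ := hshrink f p
    obtain ⟨hbp, heqp⟩ := hprop p hc
    set h : ↥D := f * ι b - ι a with hh
    have hvan : ∀ r : DiffSpec (fun i => ⇑(δ i)), c ∉ r.1.asIdeal →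
        ((h : ↥D) : ∀ p, Localization.AtPrime p.1.asIdeal) r = 0 := by
      intro r hcr
      obtain ⟨hbr, heqr⟩ := hprop r hcr
      have hcoe2 : ((h : ↥D) : ∀ p, Localization.AtPrime p.1.asIdeal) r
          = ((f : ↥D) : ∀ p, Localization.AtPrime p.1.asIdeal) r
              * algebraMap A (Localization.AtPrime r.1.asIdeal) b
            - algebraMap A (Localization.AtPrime r.1.asIdeal) a := rfl
      rw [hcoe2, heqr, sub_self]
    obtain ⟨N, hNz⟩ := hstar h c hvan
    have hmemq : h ∈ q.1.asIdeal := by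
      have h0 : (ι c * h) ^ (N + 1) ∈ q.1.asIdeal := by
        rw [hNz]
        exact Ideal.zero_mem _
      have h1 : ι c * h ∈ q.1.asIdeal := q.1.isPrime.mem_of_pow_mem _ h0
      rcases q.1.isPrime.mem_or_mem h1 with h2 | h2
      · exact absurd ((hpq c).mpr h2) hc
      · exact h2
    have hbq : ι b ∉ q.1.asIdeal := fun hx => hbp ((hpq b).mpr hx)
    have hfb : f * ι b = h + ι a := by rw [hh]; ring
    have hiff1 : f ∈ q.1.asIdeal ↔ ι a ∈ q.1.asIdeal := by
      constructor
      · intro hf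
        have : f * ι b ∈ q.1.asIdeal := Ideal.mul_mem_right _ _ hf
        rw [hfb] at this
        have := Ideal.sub_mem _ this hmemq
        simpa using this
      · intro ha
        have : f * ι b ∈ q.1.asIdeal := by
          rw [hfb]
          exact Ideal.add_mem _ hmemq ha
        rcases q.1.isPrime.mem_or_mem this with h2 | h2
        · exact h2
        · exact absurd h2 hbq
    have heqp' : ev p f * algebraMap A (Localization.AtPrime p.1.asIdeal) b
        = algebraMap A (Localization.AtPrime p.1.asIdeal) a := by
      rw [hevapp]
      exact heqp
    have hiff2 : ev p f ∈ mI p ↔ a ∈ p.1.asIdeal := by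
      constructor
      · intro hf
        rw [← hto_map p a, ← heqp']
        exact Ideal.mul_mem_right _ _ hf
      · intro ha
        have h3 : ev p f * algebraMap A (Localization.AtPrime p.1.asIdeal) b ∈ mI p := by
          rw [heqp', hto_map]
          exact ha
        rcases (hmIprime p).mem_or_mem h3 with h4 | h4
        · exact h4
        · rw [hto_map] at h4
          exact absurd h4 hbp
    rw [hiff1, hiff2]
    exact (hpq a).symm
  -- ψ ∘ φ = id
  have hψφ : ∀ q : DiffSpec dD, ψ (φ q) = q := by
    intro q
    apply Subtype.ext
    apply PrimeSpectrum.ext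
    apply Ideal.ext
    intro f
    rw [hψ]
    show f ∈ Ideal.comap (ev (φ q)) (mI (φ q)) ↔ f ∈ q.1.asIdeal
    rw [Ideal.mem_comap]
    exact (hmain q f).symm
  -- φ ∘ ψ = id
  have hφψ : ∀ p : DiffSpec (fun i => ⇑(δ i)), φ (ψ p) = p := by
    intro p
    apply Subtype.ext
    apply PrimeSpectrum.ext
    apply Ideal.ext
    intro a
    show ι a ∈ (ψ p).1.asIdeal ↔ a ∈ p.1.asIdeal
    rw [hψ]
    show ι a ∈ Ideal.comap (ev p) (mI p) ↔ a ∈ p.1.asIdeal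
    rw [Ideal.mem_comap, hevapp, hιapp]
    exact hto_map p a
  -- continuity of φ
  have hcontφ : Continuous φ := by
    apply Continuous.subtype_mk
    exact (PrimeSpectrum.continuous_comap ι).comp continuous_subtype_val
  -- continuity of ψ
  have hcontψ : Continuous ψ := by
    apply Continuous.subtype_mk
    rw [TopologicalSpace.IsTopologicalBasis.continuous_iff
      PrimeSpectrum.isTopologicalBasis_basic_opens]
    rintro _ ⟨g, rfl⟩
    rw [isOpen_iff_forall_mem_open]
    intro p hpmem
    have hgunit : IsUnit (ev p g) := by
      simp only [Set.mem_preimage, SetLike.mem_coe, PrimeSpectrum.mem_basicOpen] at hpmem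
      have : ev p g ∉ mI p := hpmem
      by_contra hnu
      exact this ((IsLocalRing.mem_maximalIdeal _).mpr hnu)
    obtain ⟨c, a, b, hc, hprop⟩ := hshrink g p
    obtain ⟨hbp, heqp⟩ := hprop p hc
    have haunit : IsUnit (algebraMap A (Localization.AtPrime p.1.asIdeal) a) := by
      rw [← heqp, ← hevapp]
      exact hgunit.mul (hunit p hbp)
    have hap : a ∉ p.1.asIdeal := by
      intro hin
      have := (hto_map p a).mpr hin
      exact ((IsLocalRing.mem_maximalIdeal _).mp this) haunit
    refine ⟨{r | c ∉ r.1.asIdeal} ∩ {r | a ∉ r.1.asIdeal}, ?_, ?_, ⟨hc, hap⟩⟩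
    · rintro r ⟨hcr, har⟩
      obtain ⟨hbr, heqr⟩ := hprop r hcr
      simp only [Set.mem_preimage, SetLike.mem_coe, PrimeSpectrum.mem_basicOpen]
      show ev r g ∉ mI r
      have hru : IsUnit (ev r g) := by
        have : IsUnit (ev r g * algebraMap A (Localization.AtPrime r.1.asIdeal) b) := by
          rw [hevapp, heqr]
          exact hunit r har
        exact isUnit_of_mul_isUnit_left this
      intro hmem
      exact ((IsLocalRing.mem_maximalIdeal _).mp hmem) hru
    · apply IsOpen.inter
      · exact (PrimeSpectrum.isOpen_basicOpen (a := c)).preimage continuous_subtype_val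
      · exact (PrimeSpectrum.isOpen_basicOpen (a := a)).preimage continuous_subtype_val
  refine ⟨{ toFun := φ, invFun := ψ, left_inv := hψφ, right_inv := hφψ,
            continuous_toFun := hcontφ, continuous_invFun := hcontψ }, ?_⟩
  intro q
  rfl
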